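/- Let X be a finite set, B = Perm(X), and let G_i and G_j be regular subgroups of B. Then |S(G_j,[G_i])| · |Norm_B(G_i)| = |R(G_i,[G_j])| · |Norm_B(G_j)|, where the cardinalities are of the finite sets of subgroups S(G_j,[G_i]) and R(G_i,[G_j]) and of the normalizer subgroups. -/

import Mathlib

open Equiv Pointwise

/-- A subgroup `N ≤ Perm X` is regular if for all `x y : X` there is exactly one
element of `N` sending `x` to `y`. -/
def IsRegularSubgroup {X : Type*} (N : Subgroup (Equiv.Perm X)) : Prop :=
  ∀ x y : X, ∃! η : N, (η : Equiv.Perm X) x = y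

/-- `S(G_j,[G_i])`: regular subgroups of `Norm_B(G_j)` isomorphic to `G_i`. -/
def SOf {X : Type*} (Gj Gi : Subgroup (Equiv.Perm X)) : Set (Subgroup (Equiv.Perm X)) :=
  {M | M ≤ Subgroup.normalizer (Gj : Set (Equiv.Perm X)) ∧ IsRegularSubgroup M ∧ Nonempty (M ≃* Gi)}

/-- `R(G_i,[G_j])`: regular subgroups of `B` isomorphic to `G_j` whose normalizer
contains `G_i`. -/
def ROf {X : Type*} (Gi Gj : Subgroup (Equiv.Perm X)) : Set (Subgroup (Equiv.Perm X)) :=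
  {N | IsRegularSubgroup N ∧ Nonempty (N ≃* Gj) ∧ Gi ≤ Subgroup.normalizer (N : Set (Equiv.Perm X))}

section Aux

lemma conj_smul_eq_iff_mem_normalizer {G : Type*} [Group G] {g : G} {H : Subgroup G} :
    MulAut.conj g • H = H ↔ g ∈ Subgroup.normalizer (H : Set G) := by
  rw [Subgroup.mem_normalizer_iff]
  constructor
  · intro h x
    constructor
    · intro hx
      rw [← h, Subgroup.mem_pointwise_smul_iff_inv_smul_mem]
      simpa [MulAut.smul_def, mul_assoc] using hx
    · intro hx
      rw [← h, Subgroup.mem_pointwise_smul_iff_inv_smul_mem] at hx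
      simpa [MulAut.smul_def, mul_assoc] using hx
  · intro h
    ext z
    rw [Subgroup.mem_pointwise_smul_iff_inv_smul_mem]
    have hz : (MulAut.conj g)⁻¹ • z = g⁻¹ * z * g := by
      simp [MulAut.smul_def]
    rw [hz, h (g⁻¹ * z * g)]
    constructor
    · intro hx; simpa [mul_assoc] using hx
    · intro hx; simpa [mul_assoc] using hx

lemma normalizer_conj_smul {G : Type*} [Group G] (a : MulAut G) (H : Subgroup G) :
    Subgroup.normalizer ((a • H : Subgroup G) : Set G) = a • Subgroup.normalizer (H : Set G) := by
  have h1 : a • H = H.map a.toMonoidHom := rfl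
  have h2 : a • Subgroup.normalizer (H : Set G) = (Subgroup.normalizer (H : Set G)).map a.toMonoidHom := rfl
  rw [h1, h2, Subgroup.map_equiv_normalizer_eq]

lemma IsRegularSubgroup.conj_smul {X : Type*} {H : Subgroup (Equiv.Perm X)}
    (hH : IsRegularSubgroup H) (g : Equiv.Perm X) :
    IsRegularSubgroup (MulAut.conj g • H) := by
  intro x y
  obtain ⟨h, hh, huniq⟩ := hH (g⁻¹ x) (g⁻¹ y)
  have hmem : g * (h : Equiv.Perm X) * g⁻¹ ∈ MulAut.conj g • H := by
    have := Subgroup.smul_mem_pointwise_smul (h : Equiv.Perm X) (MulAut.conj g) H h.2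
    simpa [MulAut.smul_def] using this
  refine ⟨⟨g * (h : Equiv.Perm X) * g⁻¹, hmem⟩, ?_, ?_⟩
  · show (g * (h : Equiv.Perm X) * g⁻¹) x = y
    rw [Equiv.Perm.mul_apply, Equiv.Perm.mul_apply, hh]
    exact g.apply_symm_apply y
  · rintro ⟨k, hk⟩ hkx
    have hk' : g⁻¹ * k * g ∈ H := by
      rw [Subgroup.mem_pointwise_smul_iff_inv_smul_mem] at hk
      simpa [MulAut.smul_def] using hk
    have hfix : ((⟨g⁻¹ * k * g, hk'⟩ : H) : Equiv.Perm X) (g⁻¹ x) = g⁻¹ y := by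
      show (g⁻¹ * k * g) (g⁻¹ x) = g⁻¹ y
      rw [Equiv.Perm.mul_apply, Equiv.Perm.mul_apply, (show ∀ a, g (g⁻¹ a) = a from fun a => g.apply_symm_apply a)]
      rw [show k x = y from hkx]
    have := huniq ⟨g⁻¹ * k * g, hk'⟩ hfix
    apply Subtype.ext
    have hval : g⁻¹ * k * g = (h : Equiv.Perm X) := congrArg Subtype.val this
    show k = g * (h : Equiv.Perm X) * g⁻¹
    rw [← hval]
    group

lemma IsRegularSubgroup.bijective_apply {X : Type*} {M : Subgroup (Equiv.Perm X)}
    (hM : IsRegularSubgroup M) (x₀ : X) :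
    Function.Bijective (fun m : M => (m : Equiv.Perm X) x₀) := by
  constructor
  · intro a b hab
    obtain ⟨c, -, hc⟩ := hM x₀ ((b : Equiv.Perm X) x₀)
    exact (hc a hab).trans (hc b rfl).symm
  · intro y
    obtain ⟨m, hm, -⟩ := hM x₀ y
    exact ⟨m, hm⟩

lemma exists_conj_smul_eq {X : Type*} [Nonempty X] {M N : Subgroup (Equiv.Perm X)}
    (hM : IsRegularSubgroup M) (hN : IsRegularSubgroup N) (f : M ≃* N) :
    ∃ g : Equiv.Perm X, MulAut.conj g • M = N := by
  obtain ⟨x₀⟩ := ‹Nonempty X›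
  let eM : M ≃ X := Equiv.ofBijective _ (hM.bijective_apply x₀)
  let eN : N ≃ X := Equiv.ofBijective _ (hN.bijective_apply x₀)
  refine ⟨(eM.symm.trans f.toEquiv).trans eN, ?_⟩
  set g : Equiv.Perm X := (eM.symm.trans f.toEquiv).trans eN with hg
  have hgeM : ∀ m : M, g (eM m) = eN (f m) := by
    intro m
    simp [hg]
  have key : ∀ (m : M) (x : X), g ((m : Equiv.Perm X) x) = (f m : Equiv.Perm X) (g x) := by
    intro m x
    conv_lhs => rw [show x = eM (eM.symm x) from (eM.apply_symm_apply x).symm]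
    conv_rhs => rw [show x = eM (eM.symm x) from (eM.apply_symm_apply x).symm]
    set m' : M := eM.symm x with hm'
    have h1 : (m : Equiv.Perm X) (eM m') = eM (m * m') := by
      show (m : Equiv.Perm X) ((m' : Equiv.Perm X) x₀) = ((m * m' : M) : Equiv.Perm X) x₀
      rfl
    rw [h1, hgeM, hgeM, map_mul]
    show (((f m) * (f m') : N) : Equiv.Perm X) x₀
        = (f m : Equiv.Perm X) (((f m') : Equiv.Perm X) x₀)
    rfl
  ext z
  rw [Subgroup.mem_pointwise_smul_iff_inv_smul_mem]
  have hinv : (MulAut.conj g)⁻¹ • z = g⁻¹ * z * g := by simp [MulAut.smul_def]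
  rw [hinv]
  constructor
  · intro hz
    have hz2 : (f ⟨g⁻¹ * z * g, hz⟩ : Equiv.Perm X) = z := by
      ext x
      have hk := key ⟨g⁻¹ * z * g, hz⟩ (g⁻¹ x)
      have hl : ((⟨g⁻¹ * z * g, hz⟩ : M) : Equiv.Perm X) (g⁻¹ x) = g⁻¹ (z x) := by
        show (g⁻¹ * z * g) (g⁻¹ x) = g⁻¹ (z x)
        rw [Equiv.Perm.mul_apply, Equiv.Perm.mul_apply, (show ∀ a, g (g⁻¹ a) = a from fun a => g.apply_symm_apply a)]
      rw [hl, (show ∀ a, g (g⁻¹ a) = a from fun a => g.apply_symm_apply a), (show ∀ a, g (g⁻¹ a) = a from fun a => g.apply_symm_apply a)] at hk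
      exact hk.symm
    rw [← hz2]
    exact (f _).2
  · intro hz
    set m : M := f.symm ⟨z, hz⟩ with hm
    have hfm : (f m : Equiv.Perm X) = z := by
      rw [hm, MulEquiv.apply_symm_apply]
    have h2 : g⁻¹ * z * g = (m : Equiv.Perm X) := by
      ext x
      rw [Equiv.Perm.mul_apply, Equiv.Perm.mul_apply, ← hfm, ← key m x, (show ∀ a, g⁻¹ (g a) = a from fun a => g.symm_apply_apply a)]
    rw [h2]
    exact m.2

end Aux

/-- The reflection principle:
`|S(G_j,[G_i])| ⬝ |Norm_B(G_i)| = |R(G_i,[G_j])| ⬝ |Norm_B(G_j)|`. -/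
theorem reflection_principle {X : Type*} [Finite X]
    (Gi Gj : Subgroup (Equiv.Perm X))
    (hGi : IsRegularSubgroup Gi) (hGj : IsRegularSubgroup Gj) :
    (SOf Gj Gi).ncard * Nat.card (Subgroup.normalizer (Gi : Set (Equiv.Perm X)))
      = (ROf Gi Gj).ncard * Nat.card (Subgroup.normalizer (Gj : Set (Equiv.Perm X))) := by
  rcases isEmpty_or_nonempty X with hX | hX
  · -- degenerate case: `Perm X` is trivial, everything collapses
    haveI : Subsingleton (Equiv.Perm X) := ⟨fun a b => Equiv.ext fun x => (hX.false x).elim⟩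
    have hsub : ∀ H K : Subgroup (Equiv.Perm X), H = K := by
      intro H K
      ext x
      rw [Subsingleton.elim x 1]
      exact iff_of_true (one_mem H) (one_mem K)
    have hSu : SOf Gj Gi = Set.univ := by
      ext M
      simp only [SOf, Set.mem_setOf_eq, Set.mem_univ, iff_true]
      exact ⟨(hsub M (Subgroup.normalizer (Gj : Set (Equiv.Perm X)))).le, fun x y => (hX.false x).elim,
        ⟨MulEquiv.subgroupCongr (hsub M Gi)⟩⟩
    have hRu : ROf Gi Gj = Set.univ := by
      ext N
      simp only [ROf, Set.mem_setOf_eq, Set.mem_univ, iff_true]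
      exact ⟨fun x y => (hX.false x).elim, ⟨MulEquiv.subgroupCongr (hsub N Gj)⟩,
        (hsub Gi (Subgroup.normalizer (N : Set (Equiv.Perm X)))).le⟩
    rw [hSu, hRu, hsub (Subgroup.normalizer (Gi : Set (Equiv.Perm X))) (Subgroup.normalizer (Gj : Set (Equiv.Perm X)))]
  · -- main case
    set Ω : Set (Equiv.Perm X) := {g | MulAut.conj g • Gi ≤ (Subgroup.normalizer (Gj : Set (Equiv.Perm X)))} with hΩdef
    have hSrep : ∀ M : SOf Gj Gi,
        ∃ g : Equiv.Perm X, MulAut.conj g • Gi = (M : Subgroup (Equiv.Perm X)) := by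
      rintro ⟨M, hle, hreg, ⟨f⟩⟩
      exact exists_conj_smul_eq hGi hreg f.symm
    choose repS hrepS using hSrep
    have hRrep : ∀ N : ROf Gi Gj,
        ∃ g : Equiv.Perm X, MulAut.conj g • Gj = (N : Subgroup (Equiv.Perm X)) := by
      rintro ⟨N, hreg, ⟨f⟩, hle⟩
      exact exists_conj_smul_eq hGj hreg f.symm
    choose repR hrepR using hRrep
    -- the bijection with SOf × normalizer Gi
    have hvalS : ∀ (M : SOf Gj Gi) (n : (Subgroup.normalizer (Gi : Set (Equiv.Perm X)))),
        MulAut.conj (repS M * (n : Equiv.Perm X)) • Gi = (M : Subgroup (Equiv.Perm X)) := by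
      intro M n
      rw [map_mul, mul_smul, conj_smul_eq_iff_mem_normalizer.mpr n.2, hrepS]
    have memΩ_S : ∀ (M : SOf Gj Gi) (n : (Subgroup.normalizer (Gi : Set (Equiv.Perm X)))),
        repS M * (n : Equiv.Perm X) ∈ Ω := by
      intro M n
      show MulAut.conj (repS M * (n : Equiv.Perm X)) • Gi ≤ (Subgroup.normalizer (Gj : Set (Equiv.Perm X)))
      rw [hvalS]
      exact M.2.1
    have hMmem : ∀ σ : Ω, MulAut.conj (σ : Equiv.Perm X) • Gi ∈ SOf Gj Gi := fun σ =>
      ⟨σ.2, hGi.conj_smul _, ⟨(Subgroup.equivSMul _ Gi).symm⟩⟩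
    have hninv : ∀ σ : Ω,
        (repS ⟨_, hMmem σ⟩)⁻¹ * (σ : Equiv.Perm X) ∈ (Subgroup.normalizer (Gi : Set (Equiv.Perm X))) := by
      intro σ
      rw [← conj_smul_eq_iff_mem_normalizer, map_mul, mul_smul, map_inv, inv_smul_eq_iff, hrepS]
    let E1 : (SOf Gj Gi) × (Subgroup.normalizer (Gi : Set (Equiv.Perm X))) ≃ Ω :=
      { toFun := fun p => ⟨repS p.1 * (p.2 : Equiv.Perm X), memΩ_S p.1 p.2⟩
        invFun := fun σ => (⟨_, hMmem σ⟩, ⟨_, hninv σ⟩)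
        left_inv := by
          rintro ⟨M, n⟩
          have hM' : (⟨_, hMmem ⟨_, memΩ_S M n⟩⟩ : SOf Gj Gi) = M := Subtype.ext (hvalS M n)
          refine Prod.ext ?_ ?_
          · exact hM'
          · apply Subtype.ext
            show (repS ⟨_, hMmem ⟨_, memΩ_S M n⟩⟩)⁻¹ * (repS M * (n : Equiv.Perm X))
                = (n : Equiv.Perm X)
            rw [hM', inv_mul_cancel_left]
        right_inv := by
          intro σ
          apply Subtype.ext
          show repS _ * ((repS _)⁻¹ * (σ : Equiv.Perm X)) = (σ : Equiv.Perm X)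
          rw [mul_inv_cancel_left] }
    -- the bijection with ROf × normalizer Gj
    have hvalR : ∀ (N : ROf Gi Gj) (n : (Subgroup.normalizer (Gj : Set (Equiv.Perm X)))),
        MulAut.conj (((n : Equiv.Perm X) * (repR N)⁻¹)⁻¹) • Gj
          = (N : Subgroup (Equiv.Perm X)) := by
      intro N n
      rw [mul_inv_rev, inv_inv, map_mul, mul_smul,
        conj_smul_eq_iff_mem_normalizer.mpr (inv_mem n.2), hrepR]
    have memΩ_R : ∀ (N : ROf Gi Gj) (n : (Subgroup.normalizer (Gj : Set (Equiv.Perm X)))),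
        (n : Equiv.Perm X) * (repR N)⁻¹ ∈ Ω := by
      intro N n
      show MulAut.conj ((n : Equiv.Perm X) * (repR N)⁻¹) • Gi ≤ (Subgroup.normalizer (Gj : Set (Equiv.Perm X)))
      rw [Subgroup.pointwise_smul_subset_iff, ← map_inv, ← normalizer_conj_smul, hvalR]
      exact N.2.2.2
    have hNmem : ∀ σ : Ω, MulAut.conj ((σ : Equiv.Perm X)⁻¹) • Gj ∈ ROf Gi Gj := by
      intro σ
      refine ⟨hGj.conj_smul _, ⟨(Subgroup.equivSMul _ Gj).symm⟩, ?_⟩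
      rw [normalizer_conj_smul, Subgroup.subset_pointwise_smul_iff, ← map_inv, inv_inv]
      exact σ.2
    have hninvR : ∀ σ : Ω,
        (σ : Equiv.Perm X) * repR ⟨_, hNmem σ⟩ ∈ (Subgroup.normalizer (Gj : Set (Equiv.Perm X))) := by
      intro σ
      rw [← conj_smul_eq_iff_mem_normalizer, map_mul, mul_smul, hrepR]
      show MulAut.conj (σ : Equiv.Perm X) • MulAut.conj ((σ : Equiv.Perm X)⁻¹) • Gj = Gj
      rw [← mul_smul, ← map_mul, mul_inv_cancel]
      simp
    let E2 : (ROf Gi Gj) × (Subgroup.normalizer (Gj : Set (Equiv.Perm X))) ≃ Ω :=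
      { toFun := fun p => ⟨(p.2 : Equiv.Perm X) * (repR p.1)⁻¹, memΩ_R p.1 p.2⟩
        invFun := fun σ => (⟨_, hNmem σ⟩, ⟨_, hninvR σ⟩)
        left_inv := by
          rintro ⟨N, n⟩
          have hN' : (⟨_, hNmem ⟨_, memΩ_R N n⟩⟩ : ROf Gi Gj) = N := Subtype.ext (hvalR N n)
          refine Prod.ext ?_ ?_
          · exact hN'
          · apply Subtype.ext
            show ((n : Equiv.Perm X) * (repR N)⁻¹) * repR ⟨_, hNmem ⟨_, memΩ_R N n⟩⟩
                = (n : Equiv.Perm X)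
            rw [hN', inv_mul_cancel_right]
        right_inv := by
          intro σ
          apply Subtype.ext
          show ((σ : Equiv.Perm X) * repR _) * (repR _)⁻¹ = (σ : Equiv.Perm X)
          rw [mul_inv_cancel_right] }
    calc (SOf Gj Gi).ncard * Nat.card (Subgroup.normalizer (Gi : Set (Equiv.Perm X)))
        = Nat.card (SOf Gj Gi) * Nat.card (Subgroup.normalizer (Gi : Set (Equiv.Perm X))) := by
          rw [Nat.card_coe_set_eq]
      _ = Nat.card ((SOf Gj Gi) × (Subgroup.normalizer (Gi : Set (Equiv.Perm X)))) := (Nat.card_prod _ _).symm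
      _ = Nat.card Ω := Nat.card_congr E1
      _ = Nat.card ((ROf Gi Gj) × (Subgroup.normalizer (Gj : Set (Equiv.Perm X)))) := (Nat.card_congr E2).symm
      _ = Nat.card (ROf Gi Gj) * Nat.card (Subgroup.normalizer (Gj : Set (Equiv.Perm X))) := Nat.card_prod _ _
      _ = (ROf Gi Gj).ncard * Nat.card (Subgroup.normalizer (Gj : Set (Equiv.Perm X))) := by
          rw [Nat.card_coe_set_eq]
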